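/- Let J, K ⊆ I be disjoint and P, Q ⊆ I be disjoint, and suppose a vector v ∈ ℝ^n has two expressions v = Σ_{j∈J} x_j (−α^∨_j) + Σ_{k∈K} x_k e_k = Σ_{p∈P} y_p (−α^∨_p) + Σ_{q∈Q} y_q e_q with all coefficients x_j, x_k, y_p, y_q nonnegative real numbers. Then x_j = 0 for every j ∈ J \ P. -/
import Mathlib


open Matrix

/-- The `j`-th simple coroot `α^∨_j := Σ_i C_{ij} e_i`, i.e. the `j`-th column of `C`. -/
def acoroot {n : ℕ} (C : Matrix (Fin n) (Fin n) ℝ) (j : Fin n) : Fin n → ℝ :=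
  fun i => C i j

/-- The cone `σ_{J,K}` of nonnegative linear combinations of the `-α^∨_j` (`j ∈ J`)
and the standard basis vectors `e_k` (`k ∈ K`). -/
def sigmaCone {n : ℕ} (C : Matrix (Fin n) (Fin n) ℝ) (J K : Finset (Fin n)) :
    Set (Fin n → ℝ) :=
  {v | ∃ x y : Fin n → ℝ, (∀ j ∈ J, 0 ≤ x j) ∧ (∀ k ∈ K, 0 ≤ y k) ∧
    v = (∑ j ∈ J, x j • (-acoroot C j)) + ∑ k ∈ K, y k • (Pi.single k 1 : Fin n → ℝ)}

theorem stmt_3'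
    (n : ℕ) (hn : 1 ≤ n) (C : Matrix (Fin n) (Fin n) ℝ)
    (hdiag : ∀ i, C i i = 2)
    (hoff : ∀ i j, i ≠ j → C i j ≤ 0)
    (hprin : ∀ S : Finset (Fin n), S.Nonempty →
      IsUnit (C.submatrix (fun a : S => (a : Fin n)) (fun a : S => (a : Fin n))) ∧
      ∀ i j : S,
        0 ≤ (C.submatrix (fun a : S => (a : Fin n)) (fun a : S => (a : Fin n)))⁻¹ i j)
    (J K : Finset (Fin n)) (hJK : Disjoint J K)
    (P Q : Finset (Fin n)) (hPQ : Disjoint P Q)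
    (x y : Fin n → ℝ)
    (hxJ : ∀ j ∈ J, 0 ≤ x j) (hxK : ∀ k ∈ K, 0 ≤ x k)
    (hyP : ∀ p ∈ P, 0 ≤ y p) (hyQ : ∀ q ∈ Q, 0 ≤ y q)
    (heq : (∑ j ∈ J, x j • (-(fun i => C i j : Fin n → ℝ))) + ∑ k ∈ K, x k • (Pi.single k 1 : Fin n → ℝ)
         = (∑ p ∈ P, y p • (-(fun i => C i p : Fin n → ℝ))) + ∑ q ∈ Q, y q • (Pi.single q 1 : Fin n → ℝ)) :
    ∀ j ∈ J \ P, x j = 0 := by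
  rcases Finset.eq_empty_or_nonempty J with hJe | hJne
  · intro j hj; rw [hJe] at hj; simp at hj
  obtain ⟨hAu, hAinv⟩ := hprin J hJne
  set A : Matrix J J ℝ :=
    C.submatrix (fun a : J => (a : Fin n)) (fun a : J => (a : Fin n)) with hAdef
  set b : J → ℝ := fun p => if (p : Fin n) ∈ P then 0 else 1 with hbdef
  have hbnn : ∀ p : J, 0 ≤ b p := by
    intro p; rw [hbdef]; dsimp only; split <;> norm_num
  set t0 : J → ℝ := b ᵥ* A⁻¹ with ht0def
  have ht0nn : ∀ i : J, 0 ≤ t0 i := by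
    intro i
    rw [ht0def]
    simp only [Matrix.vecMul, dotProduct]
    exact Finset.sum_nonneg fun p _ => mul_nonneg (hbnn p) (hAinv p i)
  have hbA : t0 ᵥ* A = b := by
    rw [ht0def, Matrix.vecMul_vecMul,
      Matrix.nonsing_inv_mul A ((Matrix.isUnit_iff_isUnit_det A).mp hAu), Matrix.vecMul_one]
  set t' : Fin n → ℝ := fun i => if h : i ∈ J then t0 ⟨i, h⟩ else 0 with ht'def
  have ht'J : ∀ (i : Fin n) (h : i ∈ J), t' i = t0 ⟨i, h⟩ := fun i h => dif_pos h
  have ht'nJ : ∀ i ∉ J, t' i = 0 := fun i h => dif_neg h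
  have ht'nn : ∀ i, 0 ≤ t' i := by
    intro i
    by_cases h : i ∈ J
    · rw [ht'J i h]; exact ht0nn _
    · rw [ht'nJ i h]
  have hkey : ∀ (p : Fin n) (hp : p ∈ J), (∑ i, t' i * C i p) = b ⟨p, hp⟩ := by
    intro p hp
    have h1 : (∑ i, t' i * C i p) = ∑ i ∈ J, t' i * C i p :=
      (Finset.sum_subset (Finset.subset_univ J)
        (fun i _ hiJ => by rw [ht'nJ i hiJ, zero_mul])).symm
    have h2 : (∑ i ∈ J, t' i * C i p) = ∑ i : J, t' (i : Fin n) * C (i : Fin n) p :=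
      (Finset.sum_coe_sort J _).symm
    have h3 : (∑ i : J, t' (i : Fin n) * C (i : Fin n) p) = ∑ i : J, t0 i * C (i : Fin n) p := by
      refine Finset.sum_congr rfl fun i _ => ?_
      rw [ht'J _ i.2]
    have h4 := congrFun hbA ⟨p, hp⟩
    rw [h1, h2, h3, ← h4]
    simp [Matrix.vecMul, dotProduct, hAdef]
  have hdot : ∀ (s : Finset (Fin n)) (c : Fin n → ℝ) (w : Fin n → Fin n → ℝ),
      t' ⬝ᵥ (∑ j ∈ s, c j • w j) = ∑ j ∈ s, c j * (t' ⬝ᵥ w j) := by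
    intro s c w
    simp only [dotProduct, Finset.sum_apply, Pi.smul_apply, smul_eq_mul, Finset.mul_sum]
    rw [Finset.sum_comm]
    exact Finset.sum_congr rfl fun j _ => Finset.sum_congr rfl fun i _ => by ring
  have hneg : ∀ p : Fin n, t' ⬝ᵥ (-(fun i => C i p : Fin n → ℝ)) = -∑ i, t' i * C i p := by
    intro p
    rw [dotProduct_neg]
    rfl
  -- LHS
  have hL : t' ⬝ᵥ ((∑ j ∈ J, x j • (-(fun i => C i j : Fin n → ℝ)))
        + ∑ k ∈ K, x k • (Pi.single k 1 : Fin n → ℝ)) = -∑ j ∈ J \ P, x j := by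
    rw [dotProduct_add, hdot, hdot]
    have hK : (∑ k ∈ K, x k * (t' ⬝ᵥ (Pi.single k 1 : Fin n → ℝ))) = 0 := by
      refine Finset.sum_eq_zero fun k hk => ?_
      rw [dotProduct_single, mul_one, ht'nJ k (Finset.disjoint_left.mp hJK.symm hk), mul_zero]
    rw [hK, add_zero]
    have hJ : (∑ j ∈ J, x j * (t' ⬝ᵥ (-(fun i => C i j : Fin n → ℝ))))
        = ∑ j ∈ J, (if j ∉ P then -x j else 0) := by
      refine Finset.sum_congr rfl fun j hjJ => ?_
      rw [hneg, hkey j hjJ, hbdef]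
      by_cases hp : j ∈ P <;> simp [hp]
    rw [hJ, Finset.sum_ite, Finset.sum_const_zero, add_zero, ← Finset.sum_neg_distrib]
    congr 1
    rw [Finset.sdiff_eq_filter]
  -- RHS
  have hR : 0 ≤ t' ⬝ᵥ ((∑ p ∈ P, y p • (-(fun i => C i p : Fin n → ℝ)))
        + ∑ q ∈ Q, y q • (Pi.single q 1 : Fin n → ℝ)) := by
    rw [dotProduct_add, hdot, hdot]
    have h1 : 0 ≤ ∑ p ∈ P, y p * (t' ⬝ᵥ (-(fun i => C i p : Fin n → ℝ))) := by
      refine Finset.sum_nonneg fun p hp => mul_nonneg (hyP p hp) ?_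
      rw [hneg]
      by_cases hpJ : p ∈ J
      · rw [hkey p hpJ]
        simp [hbdef, hp]
      · rw [neg_nonneg]
        refine Finset.sum_nonpos fun i _ => ?_
        by_cases hiJ : i ∈ J
        · exact mul_nonpos_of_nonneg_of_nonpos (ht'nn i)
            (hoff i p (fun h => hpJ (h ▸ hiJ)))
        · rw [ht'nJ i hiJ, zero_mul]
    have h2 : 0 ≤ ∑ q ∈ Q, y q * (t' ⬝ᵥ (Pi.single q 1 : Fin n → ℝ)) := by
      refine Finset.sum_nonneg fun q hq => mul_nonneg (hyQ q hq) ?_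
      rw [dotProduct_single, mul_one]
      exact ht'nn q
    exact add_nonneg h1 h2
  have hsum : (∑ j ∈ J \ P, x j) ≤ 0 := by
    have := hL.symm.trans (by rw [heq])
    nlinarith [hR, this]
  have hzero : (∑ j ∈ J \ P, x j) = 0 :=
    le_antisymm hsum (Finset.sum_nonneg fun i hi => hxJ i (Finset.mem_sdiff.mp hi).1)
  intro j hj
  exact (Finset.sum_eq_zero_iff_of_nonneg
    (fun i hi => hxJ i (Finset.mem_sdiff.mp hi).1)).mp hzero j hj

theorem stmt_3
    (n : ℕ) (hn : 1 ≤ n) (C : Matrix (Fin n) (Fin n) ℝ)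
    (hdiag : ∀ i, C i i = 2)
    (hoff : ∀ i j, i ≠ j → C i j ≤ 0)
    (hprin : ∀ S : Finset (Fin n), S.Nonempty →
      IsUnit (C.submatrix (fun a : S => (a : Fin n)) (fun a : S => (a : Fin n))) ∧
      ∀ i j : S,
        0 ≤ (C.submatrix (fun a : S => (a : Fin n)) (fun a : S => (a : Fin n)))⁻¹ i j)
    (J K : Finset (Fin n)) (hJK : Disjoint J K)
    (P Q : Finset (Fin n)) (hPQ : Disjoint P Q)
    (x y : Fin n → ℝ)
    (hxJ : ∀ j ∈ J, 0 ≤ x j) (hxK : ∀ k ∈ K, 0 ≤ x k)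
    (hyP : ∀ p ∈ P, 0 ≤ y p) (hyQ : ∀ q ∈ Q, 0 ≤ y q)
    (heq : (∑ j ∈ J, x j • (-acoroot C j)) + ∑ k ∈ K, x k • (Pi.single k 1 : Fin n → ℝ)
         = (∑ p ∈ P, y p • (-acoroot C p)) + ∑ q ∈ Q, y q • (Pi.single q 1 : Fin n → ℝ)) :
    ∀ j ∈ J \ P, x j = 0 := by
  exact stmt_3' n hn C hdiag hoff hprin J K hJK P Q hPQ x y hxJ hxK hyP hyQ heq
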